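/- arXiv:0909.3375 — 3 statements merged into one kernel-verified Lean document; each statement's English description precedes it below -/
import Mathlib

section
/- Let E be a linear operator on a finite-dimensional complex vector space V, and let S ⊆ V be a set of eigenvectors of E that spans V. Suppose that for any two vectors u, v ∈ S there is a finite chain u = w_0, w_1, ..., w_m = v in S such that consecutive elements w_l, w_{l+1} appear together in some linear dependence w = α·w_l + β·w_{l+1} + γ·w'' with all of w, w_l, w_{l+1}, w'' in S, the three vectors w_l, w_{l+1}, w'' linearly independent, and α, β, γ all nonzero. Then all eigenvalues of vectors in S coincide and E is a scalar multiple of the identity. -/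
lemma step_eq_ev
    (V : Type*) [AddCommGroup V] [Module ℂ V]
    (E : V →ₗ[ℂ] V) (S : Set V) (ev : V → ℂ)
    (hev : ∀ s ∈ S, E s = ev s • s)
    (w₁ w₂ a c : V) (hw₁ : w₁ ∈ S) (hw₂ : w₂ ∈ S) (ha : a ∈ S) (hc : c ∈ S)
    (α β γ : ℂ) (hα : α ≠ 0) (hβ : β ≠ 0) (hγ : γ ≠ 0)
    (hli : LinearIndependent ℂ ![w₁, w₂, c])
    (heq : a = α • w₁ + β • w₂ + γ • c) : ev w₁ = ev w₂ := by
  have hEa := hev a ha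
  have hE1 := hev w₁ hw₁
  have hE2 := hev w₂ hw₂
  have hEc := hev c hc
  have key : (α * (ev w₁ - ev a)) • w₁ + (β * (ev w₂ - ev a)) • w₂
      + (γ * (ev c - ev a)) • c = 0 := by
    have h1 : E a = α • (ev w₁ • w₁) + β • (ev w₂ • w₂) + γ • (ev c • c) := by
      rw [heq]; simp [hE1, hE2, hEc]
    have h2 : E a = ev a • (α • w₁ + β • w₂ + γ • c) := by rw [hEa, heq]
    have h3 := h1.symm.trans h2
    linear_combination (norm := module) h3
  have hz := Fintype.linearIndependent_iff.mp hli
    ![α * (ev w₁ - ev a), β * (ev w₂ - ev a), γ * (ev c - ev a)]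
    (by simpa [Fin.sum_univ_three] using key)
  have h0 := hz 0
  have h1 := hz 1
  simp only [Matrix.cons_val_zero, Matrix.cons_val_one, Matrix.head_cons,
    mul_eq_zero, sub_eq_zero] at h0 h1
  have e1 : ev w₁ = ev a := h0.resolve_left hα
  have e2 : ev w₂ = ev a := h1.resolve_left hβ
  rw [e1, e2]

/-- If a spanning set `S` of eigenvectors of `E` is "chain connected" through linear
dependences `a = α • w_l + β • w_{l+1} + γ • c` with all members in `S`, the triple
`w_l, w_{l+1}, c` linearly independent and `α, β, γ ≠ 0`, then all eigenvalues
coincide and `E` is a scalar multiple of the identity. -/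
theorem scalar_of_chain_connected_eigenvectors
    (V : Type*) [AddCommGroup V] [Module ℂ V] [FiniteDimensional ℂ V]
    (E : V →ₗ[ℂ] V) (S : Set V) (ev : V → ℂ)
    (hS0 : ∀ s ∈ S, s ≠ 0)
    (hev : ∀ s ∈ S, E s = ev s • s)
    (hspan : Submodule.span ℂ S = ⊤)
    (hchain : ∀ u ∈ S, ∀ v ∈ S, ∃ m : ℕ, ∃ z : Fin (m + 1) → V,
      (∀ l, z l ∈ S) ∧ z 0 = u ∧ z (Fin.last m) = v ∧
      ∀ l : Fin m, ∃ a ∈ S, ∃ c ∈ S, ∃ α β γ : ℂ, α ≠ 0 ∧ β ≠ 0 ∧ γ ≠ 0 ∧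
        LinearIndependent ℂ ![z l.castSucc, z l.succ, c] ∧
        a = α • z l.castSucc + β • z l.succ + γ • c) :
    (∀ u ∈ S, ∀ v ∈ S, ev u = ev v) ∧ ∃ e : ℂ, E = e • LinearMap.id := by
  have hall : ∀ u ∈ S, ∀ v ∈ S, ev u = ev v := by
    intro u hu v hv
    obtain ⟨m, z, hzS, hz0, hzl, hstep⟩ := hchain u hu v hv
    have hcons : ∀ l : Fin m, ev (z l.castSucc) = ev (z l.succ) := by
      intro l
      obtain ⟨a, ha, c, hc, α, β, γ, hα, hβ, hγ, hli, heq⟩ := hstep l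
      exact step_eq_ev V E S ev hev _ _ a c (hzS _) (hzS _) ha hc α β γ hα hβ hγ hli heq
    have : ∀ i : Fin (m + 1), ev (z 0) = ev (z i) := by
      intro i
      induction i using Fin.induction with
      | zero => rfl
      | succ j ih => exact ih.trans (hcons j)
    calc ev u = ev (z 0) := by rw [hz0]
      _ = ev (z (Fin.last m)) := this _
      _ = ev v := by rw [hzl]
  refine ⟨hall, ?_⟩
  rcases Set.eq_empty_or_nonempty S with hSe | ⟨s₀, hs₀⟩
  · refine ⟨0, ?_⟩
    have htriv : ∀ x : V, x = 0 := by
      intro x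
      have : x ∈ Submodule.span ℂ S := hspan.symm ▸ Submodule.mem_top
      rw [hSe, Submodule.span_empty, Submodule.mem_bot] at this
      exact this
    ext x
    simp [htriv x, htriv (E x)]
  · refine ⟨ev s₀, ?_⟩
    apply LinearMap.ext_on hspan
    intro x hx
    rw [hev x hx, hall x hx s₀ hs₀]
    simp
end

section
/- With safe vectors as defined (⟨η_x, Φ̂_{b}(i)⟩ = δ_{x(b),i} for guessing functions x : {1,...,d+1} → {1,...,d}): if x, u, v, w are guessing functions such that there exist two distinct bases b′, b̃ with x(b′) = v(b′) ≠ u(b′) = w(b′), x(b̃) = u(b̃) ≠ v(b̃) = w(b̃), and x(b) = u(b) = v(b) = w(b) for all other b, and if the projectors {|Φ̂_b(i)⟩⟨Φ̂_b(i)|} span the whole space of operators (so that safe vectors are uniquely determined by their inner products with all Φ̂_b(i)), then η_x = η_u + η_v − η_w. -/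
noncomputable def Omega (d : ℕ) : EuclideanSpace ℂ (Fin d × Fin d) :=
  WithLp.toLp 2 (fun p => if p.1 = p.2 then (((Real.sqrt d)⁻¹ : ℝ) : ℂ) else 0)

noncomputable def idTensor {d : ℕ} (A : Matrix (Fin d) (Fin d) ℂ)
    (ψ : EuclideanSpace ℂ (Fin d × Fin d)) : EuclideanSpace ℂ (Fin d × Fin d) :=
  WithLp.toLp 2 (fun p => ∑ m, A p.2 m * ψ (p.1, m))

noncomputable def projMat {d : ℕ} (φ : EuclideanSpace ℂ (Fin d)) : Matrix (Fin d) (Fin d) ℂ :=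
  Matrix.of fun i j => φ i * (starRingEnd ℂ) (φ j)

/-- `Φ̂ = (1 ⊗ |φ⟩⟨φ|) Ω`. -/
noncomputable def hatPhi {d : ℕ} (φ : EuclideanSpace ℂ (Fin d)) :
    EuclideanSpace ℂ (Fin d × Fin d) :=
  idTensor (projMat φ) (Omega d)
/-- Under non-degeneracy (the vectors `Φ̂_b(i)` span `H ⊗ H`, so safe vectors are
uniquely determined by their inner products with all `Φ̂_b(i)`), the combinatorial
relation between guessing functions `x, u, v, w` forces `η_x = η_u + η_v - η_w`. -/
theorem safe_vector_decomposition (d : ℕ) (hd : 0 < d)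
    (Φ : Fin (d + 1) → Fin d → EuclideanSpace ℂ (Fin d))
    (hΦ : ∀ b, Orthonormal ℂ (Φ b))
    (hspan : Submodule.span ℂ
      (Set.range fun p : Fin (d + 1) × Fin d => hatPhi (Φ p.1 p.2)) = ⊤)
    (x u v w : Fin (d + 1) → Fin d)
    (b' bt : Fin (d + 1)) (hbb : b' ≠ bt)
    (h1 : x b' = v b') (h2 : u b' = w b') (h3 : x b' ≠ u b')
    (h4 : x bt = u bt) (h5 : v bt = w bt) (h6 : x bt ≠ v bt)
    (h7 : ∀ b, b ≠ b' → b ≠ bt → (x b = u b ∧ u b = v b ∧ v b = w b))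
    (ηx ηu ηv ηw : EuclideanSpace ℂ (Fin d × Fin d))
    (hx : ∀ b i, (inner ℂ ηx (hatPhi (Φ b i)) : ℂ) = if x b = i then 1 else 0)
    (hu : ∀ b i, (inner ℂ ηu (hatPhi (Φ b i)) : ℂ) = if u b = i then 1 else 0)
    (hv : ∀ b i, (inner ℂ ηv (hatPhi (Φ b i)) : ℂ) = if v b = i then 1 else 0)
    (hw : ∀ b i, (inner ℂ ηw (hatPhi (Φ b i)) : ℂ) = if w b = i then 1 else 0) :
    ηx = ηu + ηv - ηw := by
  set η := ηx - ηu - ηv + ηw with hη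
  have key : ∀ b i, (inner ℂ η (hatPhi (Φ b i)) : ℂ) = 0 := by
    intro b i
    have : (inner ℂ η (hatPhi (Φ b i)) : ℂ)
        = inner ℂ ηx (hatPhi (Φ b i)) - inner ℂ ηu (hatPhi (Φ b i))
          - inner ℂ ηv (hatPhi (Φ b i)) + inner ℂ ηw (hatPhi (Φ b i)) := by
      simp [hη, inner_sub_left, inner_add_left]
    rw [this, hx, hu, hv, hw]
    by_cases hb1 : b = b'
    · subst hb1; rw [h1, ← h2]; by_cases h : u b = i <;> by_cases h' : v b = i <;> simp [h, h']
    by_cases hb2 : b = bt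
    · subst hb2; rw [h4, ← h5]; by_cases h : u b = i <;> by_cases h' : v b = i <;> simp [h, h']
    · obtain ⟨e1, e2, e3⟩ := h7 b hb1 hb2
      rw [e1, e2, e3]; by_cases h : w b = i <;> simp [h]
  have hall : ∀ z : EuclideanSpace ℂ (Fin d × Fin d), (inner ℂ η z : ℂ) = 0 := by
    intro z
    have hz : z ∈ Submodule.span ℂ
        (Set.range fun p : Fin (d + 1) × Fin d => hatPhi (Φ p.1 p.2)) := by
      rw [hspan]; exact Submodule.mem_top
    induction hz using Submodule.span_induction with
    | mem y hy => obtain ⟨⟨b, i⟩, rfl⟩ := hy; exact key b i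
    | zero => simp
    | add y z _ _ hy hz => rw [inner_add_right, hy, hz, add_zero]
    | smul c y _ hy => rw [inner_smul_right, hy, mul_zero]
  have hz : η = 0 := by
    have := hall η
    exact inner_self_eq_zero.mp this
  have : ηx - ηu - ηv + ηw = 0 := hz
  linear_combination (norm := abel1) this
end

section
/- Let V, W be finite-dimensional complex vector spaces and S ⊆ V, T ⊆ W spanning sets. Suppose E : V ⊗ W → V ⊗ W is a linear operator such that every simple tensor s ⊗ t with s ∈ S, t ∈ T is an eigenvector of E. If additionally any two vectors of S (resp. T) can be connected by a chain of decompositions s = s₁ + s₂ − s₃ into linearly independent elements of S (resp. T) forcing equal eigenvalues, then E is a scalar multiple of the identity on V ⊗ W. -/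
open scoped TensorProduct

private lemma eig3_aux {X : Type*} [AddCommGroup X] [Module ℂ X] (x₁ x₂ x₃ : X)
    (h : LinearIndependent ℂ ![x₁, x₂, x₃]) (μ₁ μ₂ μ₃ μ : ℂ)
    (heq : μ₁ • x₁ + μ₂ • x₂ - μ₃ • x₃ = μ • x₁ + μ • x₂ - μ • x₃) :
    μ₁ = μ ∧ μ₂ = μ ∧ μ₃ = μ := by
  rw [Fintype.linearIndependent_iff] at h
  have h0 := h ![μ₁ - μ, μ₂ - μ, μ - μ₃] (by
    simp only [Fin.sum_univ_three, Matrix.cons_val_zero, Matrix.cons_val_one, Matrix.head_cons,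
      Matrix.cons_val_two, Matrix.tail_cons]
    linear_combination (norm := module) heq)
  refine ⟨sub_eq_zero.mp (h0 0), sub_eq_zero.mp (h0 1), (sub_eq_zero.mp (h0 2)).symm⟩

/-- If every simple tensor `s ⊗ t` with `s ∈ S`, `t ∈ T` (spanning sets of nonzero
vectors) is an eigenvector of `E : V ⊗ W → V ⊗ W`, and any two elements of `S`
(resp. `T`) are connected by a chain of decompositions `s = s₁ + s₂ - s₃` into
linearly independent elements of the set, then `E` is a scalar multiple of the
identity. -/
theorem scalar_on_tensor_of_product_eigenvectors
    (V W : Type*) [AddCommGroup V] [Module ℂ V] [FiniteDimensional ℂ V]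
    [AddCommGroup W] [Module ℂ W] [FiniteDimensional ℂ W]
    (S : Set V) (T : Set W)
    (hS0 : ∀ s ∈ S, s ≠ 0) (hT0 : ∀ t ∈ T, t ≠ 0)
    (hSspan : Submodule.span ℂ S = ⊤) (hTspan : Submodule.span ℂ T = ⊤)
    (E : TensorProduct ℂ V W →ₗ[ℂ] TensorProduct ℂ V W)
    (heig : ∀ s ∈ S, ∀ t ∈ T, ∃ μ : ℂ, E (s ⊗ₜ[ℂ] t) = μ • (s ⊗ₜ[ℂ] t))
    (hSchain : ∀ u ∈ S, ∀ v ∈ S, ∃ m : ℕ, ∃ z : Fin (m + 1) → V,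
      (∀ l, z l ∈ S) ∧ z 0 = u ∧ z (Fin.last m) = v ∧
      ∀ l : Fin m, ∃ s ∈ S, ∃ s₁ ∈ S, ∃ s₂ ∈ S, ∃ s₃ ∈ S,
        LinearIndependent ℂ ![s₁, s₂, s₃] ∧ s = s₁ + s₂ - s₃ ∧
        z l.castSucc ∈ ({s, s₁, s₂, s₃} : Set V) ∧
        z l.succ ∈ ({s, s₁, s₂, s₃} : Set V))
    (hTchain : ∀ u ∈ T, ∀ v ∈ T, ∃ m : ℕ, ∃ z : Fin (m + 1) → W,
      (∀ l, z l ∈ T) ∧ z 0 = u ∧ z (Fin.last m) = v ∧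
      ∀ l : Fin m, ∃ t ∈ T, ∃ t₁ ∈ T, ∃ t₂ ∈ T, ∃ t₃ ∈ T,
        LinearIndependent ℂ ![t₁, t₂, t₃] ∧ t = t₁ + t₂ - t₃ ∧
        z l.castSucc ∈ ({t, t₁, t₂, t₃} : Set W) ∧
        z l.succ ∈ ({t, t₁, t₂, t₃} : Set W)) :
    ∃ c : ℂ, E = c • LinearMap.id := by
  classical
  choose μf hμf using heig
  -- contraction maps
  have contractW : ∀ t : W, t ≠ 0 → ∃ ψ : (V ⊗[ℂ] W) →ₗ[ℂ] V, ∀ v : V, ψ (v ⊗ₜ[ℂ] t) = v := by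
    intro t ht
    have h1 := (not_iff_not.mpr (Module.forall_dual_apply_eq_zero_iff ℂ t)).mpr ht
    push_neg at h1
    obtain ⟨f, hf⟩ := h1
    refine ⟨(TensorProduct.rid ℂ V).toLinearMap ∘ₗ LinearMap.lTensor V ((f t)⁻¹ • f), fun v => ?_⟩
    simp [TensorProduct.rid_tmul, smul_smul, inv_mul_cancel₀ hf]
  have contractV : ∀ s : V, s ≠ 0 → ∃ ψ : (V ⊗[ℂ] W) →ₗ[ℂ] W, ∀ w : W, ψ (s ⊗ₜ[ℂ] w) = w := by
    intro s hs
    have h1 := (not_iff_not.mpr (Module.forall_dual_apply_eq_zero_iff ℂ s)).mpr hs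
    push_neg at h1
    obtain ⟨f, hf⟩ := h1
    refine ⟨(TensorProduct.lid ℂ W).toLinearMap ∘ₗ LinearMap.rTensor W ((f s)⁻¹ • f), fun w => ?_⟩
    simp [TensorProduct.lid_tmul, smul_smul, inv_mul_cancel₀ hf]
  have tmul_ne : ∀ s : V, s ≠ 0 → ∀ t : W, t ≠ 0 → s ⊗ₜ[ℂ] t ≠ 0 := by
    intro s hs t ht h0
    obtain ⟨ψ, hψ⟩ := contractW t ht
    apply hs
    have := congrArg ψ h0
    simpa [hψ] using this
  -- linear independence of simple tensors
  have indepV : ∀ s₁ s₂ s₃ : V, LinearIndependent ℂ ![s₁, s₂, s₃] → ∀ t : W, t ≠ 0 →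
      LinearIndependent ℂ ![s₁ ⊗ₜ[ℂ] t, s₂ ⊗ₜ[ℂ] t, s₃ ⊗ₜ[ℂ] t] := by
    intro s₁ s₂ s₃ h t ht
    obtain ⟨ψ, hψ⟩ := contractW t ht
    set φ : V →ₗ[ℂ] V ⊗[ℂ] W := (TensorProduct.mk ℂ V W).flip t with hφ
    have hker : LinearMap.ker φ = ⊥ :=
      LinearMap.ker_eq_bot.mpr (Function.LeftInverse.injective (g := ψ) (fun v => by
        simp [hφ, hψ]))
    have h2 := h.map' φ hker
    have h3 : φ ∘ ![s₁, s₂, s₃] = ![s₁ ⊗ₜ[ℂ] t, s₂ ⊗ₜ[ℂ] t, s₃ ⊗ₜ[ℂ] t] := by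
      funext i; fin_cases i <;> simp [hφ]
    rwa [h3] at h2
  have indepW : ∀ t₁ t₂ t₃ : W, LinearIndependent ℂ ![t₁, t₂, t₃] → ∀ s : V, s ≠ 0 →
      LinearIndependent ℂ ![s ⊗ₜ[ℂ] t₁, s ⊗ₜ[ℂ] t₂, s ⊗ₜ[ℂ] t₃] := by
    intro t₁ t₂ t₃ h s hs
    obtain ⟨ψ, hψ⟩ := contractV s hs
    set φ : W →ₗ[ℂ] V ⊗[ℂ] W := TensorProduct.mk ℂ V W s with hφ
    have hker : LinearMap.ker φ = ⊥ :=
      LinearMap.ker_eq_bot.mpr (Function.LeftInverse.injective (g := ψ) (fun w => by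
        simp [hφ, hψ]))
    have h2 := h.map' φ hker
    have h3 : φ ∘ ![t₁, t₂, t₃] = ![s ⊗ₜ[ℂ] t₁, s ⊗ₜ[ℂ] t₂, s ⊗ₜ[ℂ] t₃] := by
      funext i; fin_cases i <;> simp [hφ]
    rwa [h3] at h2
  -- congruence for μf
  have μcongr : ∀ a b (ha : a ∈ S) (hb : b ∈ S) (t : W) (ht : t ∈ T), a = b →
      μf a ha t ht = μf b hb t ht := by
    rintro a b ha hb t ht rfl; rfl
  have μcongr' : ∀ (s : V) (hs : s ∈ S) a b (ha : a ∈ T) (hb : b ∈ T), a = b →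
      μf s hs a ha = μf s hs b hb := by
    rintro s hs a b ha hb rfl; rfl
  -- quadruple step, V side
  have quadV : ∀ t (ht : t ∈ T), ∀ s (hs : s ∈ S), ∀ s₁ (h₁ : s₁ ∈ S), ∀ s₂ (h₂ : s₂ ∈ S),
      ∀ s₃ (h₃ : s₃ ∈ S), LinearIndependent ℂ ![s₁, s₂, s₃] → s = s₁ + s₂ - s₃ →
      ∀ a (ha : a ∈ S), a ∈ ({s, s₁, s₂, s₃} : Set V) → μf a ha t ht = μf s hs t ht := by
    intro t ht s hs s₁ h₁ s₂ h₂ s₃ h₃ hli hdec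
    have ht0 := hT0 t ht
    have expand : s ⊗ₜ[ℂ] t = s₁ ⊗ₜ[ℂ] t + s₂ ⊗ₜ[ℂ] t - s₃ ⊗ₜ[ℂ] t := by
      rw [hdec, TensorProduct.sub_tmul, TensorProduct.add_tmul]
    have e := hμf s hs t ht
    rw [expand, map_sub, map_add, hμf s₁ h₁ t ht, hμf s₂ h₂ t ht, hμf s₃ h₃ t ht,
      smul_sub, smul_add] at e
    obtain ⟨e1, e2, e3⟩ := eig3_aux _ _ _ (indepV s₁ s₂ s₃ hli t ht0) _ _ _ _ e
    intro a ha hmem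
    simp only [Set.mem_insert_iff, Set.mem_singleton_iff] at hmem
    rcases hmem with rfl | rfl | rfl | rfl
    · rfl
    · exact e1
    · exact e2
    · exact e3
  -- quadruple step, W side
  have quadW : ∀ s (hs : s ∈ S), ∀ t (ht : t ∈ T), ∀ t₁ (h₁ : t₁ ∈ T), ∀ t₂ (h₂ : t₂ ∈ T),
      ∀ t₃ (h₃ : t₃ ∈ T), LinearIndependent ℂ ![t₁, t₂, t₃] → t = t₁ + t₂ - t₃ →
      ∀ a (ha : a ∈ T), a ∈ ({t, t₁, t₂, t₃} : Set W) → μf s hs a ha = μf s hs t ht := by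
    intro s hs t ht t₁ h₁ t₂ h₂ t₃ h₃ hli hdec
    have hs0 := hS0 s hs
    have expand : s ⊗ₜ[ℂ] t = s ⊗ₜ[ℂ] t₁ + s ⊗ₜ[ℂ] t₂ - s ⊗ₜ[ℂ] t₃ := by
      rw [hdec, TensorProduct.tmul_sub, TensorProduct.tmul_add]
    have e := hμf s hs t ht
    rw [expand, map_sub, map_add, hμf s hs t₁ h₁, hμf s hs t₂ h₂, hμf s hs t₃ h₃,
      smul_sub, smul_add] at e
    obtain ⟨e1, e2, e3⟩ := eig3_aux _ _ _ (indepW t₁ t₂ t₃ hli s hs0) _ _ _ _ e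
    intro a ha hmem
    simp only [Set.mem_insert_iff, Set.mem_singleton_iff] at hmem
    rcases hmem with rfl | rfl | rfl | rfl
    · rfl
    · exact e1
    · exact e2
    · exact e3
  -- chain propagation, V side
  have chainV : ∀ t (ht : t ∈ T), ∀ u (hu : u ∈ S), ∀ v (hv : v ∈ S),
      μf u hu t ht = μf v hv t ht := by
    intro t ht u hu v hv
    obtain ⟨m, z, hzS, hz0, hzl, hstep⟩ := hSchain u hu v hv
    have key : ∀ k : ℕ, ∀ hk : k < m + 1, μf (z ⟨k, hk⟩) (hzS _) t ht = μf u hu t ht := by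
      intro k
      induction k with
      | zero => intro hk; exact μcongr _ _ _ _ t ht hz0
      | succ k ih =>
        intro hk
        have hkm : k < m := by omega
        obtain ⟨s, hs, s₁, h₁, s₂, h₂, s₃, h₃, hli, hdec, hm1, hm2⟩ := hstep ⟨k, hkm⟩
        have e1 := quadV t ht s hs s₁ h₁ s₂ h₂ s₃ h₃ hli hdec _ (hzS _) hm1
        have e2 := quadV t ht s hs s₁ h₁ s₂ h₂ s₃ h₃ hli hdec _ (hzS _) hm2
        have hcs : (Fin.castSucc ⟨k, hkm⟩ : Fin (m + 1)) = ⟨k, by omega⟩ := rfl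
        have hsu : (Fin.succ ⟨k, hkm⟩ : Fin (m + 1)) = ⟨k + 1, hk⟩ := rfl
        rw [hcs] at e1
        rw [hsu] at e2
        rw [e2, ← e1]
        exact ih (by omega)
    have h1 := key m (by omega)
    have h2 : μf (z ⟨m, by omega⟩) (hzS _) t ht = μf v hv t ht := μcongr _ _ _ _ t ht hzl
    rw [← h2, h1]
  -- chain propagation, W side
  have chainW : ∀ s (hs : s ∈ S), ∀ u (hu : u ∈ T), ∀ v (hv : v ∈ T),
      μf s hs u hu = μf s hs v hv := by
    intro s hs u hu v hv
    obtain ⟨m, z, hzT, hz0, hzl, hstep⟩ := hTchain u hu v hv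
    have key : ∀ k : ℕ, ∀ hk : k < m + 1, μf s hs (z ⟨k, hk⟩) (hzT _) = μf s hs u hu := by
      intro k
      induction k with
      | zero => intro hk; exact μcongr' s hs _ _ _ _ hz0
      | succ k ih =>
        intro hk
        have hkm : k < m := by omega
        obtain ⟨t, ht, t₁, h₁, t₂, h₂, t₃, h₃, hli, hdec, hm1, hm2⟩ := hstep ⟨k, hkm⟩
        have e1 := quadW s hs t ht t₁ h₁ t₂ h₂ t₃ h₃ hli hdec _ (hzT _) hm1
        have e2 := quadW s hs t ht t₁ h₁ t₂ h₂ t₃ h₃ hli hdec _ (hzT _) hm2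
        have hcs : (Fin.castSucc ⟨k, hkm⟩ : Fin (m + 1)) = ⟨k, by omega⟩ := rfl
        have hsu : (Fin.succ ⟨k, hkm⟩ : Fin (m + 1)) = ⟨k + 1, hk⟩ := rfl
        rw [hcs] at e1
        rw [hsu] at e2
        rw [e2, ← e1]
        exact ih (by omega)
    have h1 := key m (by omega)
    have h2 : μf s hs (z ⟨m, by omega⟩) (hzT _) = μf s hs v hv := μcongr' s hs _ _ _ _ hzl
    rw [← h2, h1]
  -- global constant
  have main : ∃ c : ℂ, ∀ s ∈ S, ∀ t ∈ T, E (s ⊗ₜ[ℂ] t) = c • (s ⊗ₜ[ℂ] t) := by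
    by_cases hST : S.Nonempty ∧ T.Nonempty
    · obtain ⟨⟨s₀, hs₀⟩, ⟨t₀, ht₀⟩⟩ := hST
      refine ⟨μf s₀ hs₀ t₀ ht₀, fun s hs t ht => ?_⟩
      rw [hμf s hs t ht, chainV t ht s hs s₀ hs₀, chainW s₀ hs₀ t ht t₀ ht₀]
    · refine ⟨0, fun s hs t ht => absurd ⟨⟨s, hs⟩, ⟨t, ht⟩⟩ hST⟩
  obtain ⟨c, hc⟩ := main
  refine ⟨c, ?_⟩
  have spanT : Submodule.span ℂ
      (Set.image2 (fun m n => (TensorProduct.mk ℂ V W) m n) S T) = ⊤ := by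
    rw [← Submodule.map₂_span_span ℂ (TensorProduct.mk ℂ V W) S T, hSspan, hTspan,
      TensorProduct.map₂_mk_top_top_eq_top]
  have hx : ∀ x : V ⊗[ℂ] W, E x = c • x := by
    intro x
    have hx' : x ∈ Submodule.span ℂ
        (Set.image2 (fun m n => (TensorProduct.mk ℂ V W) m n) S T) := by
      rw [spanT]; trivial
    induction hx' using Submodule.span_induction with
    | mem y hy =>
      obtain ⟨s, hs, t, ht, rfl⟩ := hy
      exact hc s hs t ht
    | zero => simp
    | add y z _ _ h1 h2 => rw [map_add, h1, h2, smul_add]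
    | smul a y _ h => rw [map_smul, h, smul_comm]
  exact LinearMap.ext fun x => by simp [hx x]
end
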